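/- (Corollary 2) The FIE is RGAS if: (a) the system x⁺ = f(x,w), y = h(x) + v is i-IOSS with KL bound β(s,t) = c₁·s^{a₁}·(t+1)^{−b₁} for some constants c₁, a₁, b₁ > 0; (b) the infimum of the FIE is attainable at each time t when the cost is V_t(χ(0) − x̄₀, ω) = l_x(χ(0) − x̄₀)·(t+1)^{−b₂} + l_{wv}(ω, ν, t), where b₂ > 0, l_x and l_{wv} are continuous, c₂·|x|^{a₂} ≤ l_x(x) ≤ γ′ₓ(|x|) for all x ∈ ℝⁿ with constants c₂, a₂ > 0 and γ′ₓ a K∞-function, and γ̲_w(‖ω‖_{0:t−1}) + γ̲_v(‖ν‖_{0:t}) ≤ l_{wv}(ω, ν, t) ≤ γ_w(‖ω‖_{0:t−1}) + γ_v(‖ν‖_{0:t}) with γ̲_w, γ̲_v, γ_w, γ_v K∞-functions; and (c) a₂/b₂ ≥ a₁/b₁. -/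

import Mathlib

open Filter Topology

/-- A K-function: continuous on [0,∞), strictly increasing on [0,∞), zero at zero. -/
def IsKFun (α : ℝ → ℝ) : Prop :=
  ContinuousOn α (Set.Ici 0) ∧ StrictMonoOn α (Set.Ici 0) ∧ α 0 = 0

/-- A K∞-function: a K-function tending to ∞ at ∞. -/
def IsKInftyFun (α : ℝ → ℝ) : Prop :=
  IsKFun α ∧ Tendsto α atTop atTop

/-- An L-function: continuous on [0,∞), nonincreasing on [0,∞), tending to 0 at ∞. -/
def IsLFun (φ : ℝ → ℝ) : Prop :=
  ContinuousOn φ (Set.Ici 0) ∧ AntitoneOn φ (Set.Ici 0) ∧ Tendsto φ atTop (𝓝 0)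

/-- A KL-function. -/
def IsKLFun (β : ℝ → ℝ → ℝ) : Prop :=
  (∀ t, 0 ≤ t → IsKFun fun s => β s t) ∧ (∀ s, 0 ≤ s → IsLFun fun t => β s t)

/-- Solution of the discrete-time system `x⁺ = f(x,w)`. -/
def traj {X W : Type*} (f : X → W → X) (x0 : X) (w : ℕ → W) : ℕ → X
  | 0 => x0
  | t + 1 => f (traj f x0 w t) (w t)

/-- `seqSup z m = max_{0 ≤ i < m} ‖z i‖` (0 when the index range is empty), so
`‖z‖_{0:t-1} = seqSup z t` and `‖z‖_{0:t} = seqSup z (t+1)`. -/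
noncomputable def seqSup {E : Type*} [SeminormedAddGroup E] (z : ℕ → E) (m : ℕ) : ℝ :=
  (((Finset.range m).sup fun i => ‖z i‖₊ : NNReal) : ℝ)

lemma kfun_nonneg {α : ℝ → ℝ} (hα : IsKFun α) {s : ℝ} (hs : 0 ≤ s) : 0 ≤ α s := by
  rcases eq_or_lt_of_le hs with h | h
  · rw [← h, hα.2.2]
  · rw [← hα.2.2]
    exact (hα.2.1 (Set.self_mem_Ici) (Set.mem_Ici.2 hs) h).le

lemma IsKFun.add {α β : ℝ → ℝ} (hα : IsKFun α) (hβ : IsKFun β) :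
    IsKFun (fun s => α s + β s) :=
  ⟨hα.1.add hβ.1, hα.2.1.add hβ.2.1, by simp [hα.2.2, hβ.2.2]⟩

lemma IsKFun.compK {α β : ℝ → ℝ} (hα : IsKFun α) (hβ : IsKFun β) :
    IsKFun (fun s => α (β s)) := by
  have hmaps : Set.MapsTo β (Set.Ici 0) (Set.Ici 0) := fun x hx => kfun_nonneg hβ hx
  exact ⟨hα.1.comp hβ.1 hmaps, hα.2.1.comp hβ.2.1 hmaps, by show α (β 0) = 0; rw [hβ.2.2, hα.2.2]⟩

lemma isKFun_linear {c : ℝ} (hc : 0 < c) : IsKFun (fun s => c * s) :=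
  ⟨(continuous_const.mul continuous_id).continuousOn,
   fun x _ y _ hxy => by exact mul_lt_mul_of_pos_left hxy hc, mul_zero c⟩

lemma isKFun_rpow_mul {C a : ℝ} (hC : 0 < C) (ha : 0 < a) :
    IsKFun (fun s => C * s ^ a) := by
  refine ⟨continuousOn_const.mul (continuousOn_id.rpow_const fun x _ => Or.inr ha.le), ?_, ?_⟩
  · intro x hx y _ hxy
    exact mul_lt_mul_of_pos_left (Real.rpow_lt_rpow hx hxy ha) hC
  · show C * (0:ℝ) ^ a = 0
    rw [Real.zero_rpow ha.ne', mul_zero]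

lemma kfun_split2 {α : ℝ → ℝ} (hα : IsKFun α) {x y : ℝ} (hx : 0 ≤ x) (hy : 0 ≤ y) :
    α (x + y) ≤ α (2 * x) + α (2 * y) := by
  have h2x : (0:ℝ) ≤ 2 * x := by linarith
  have h2y : (0:ℝ) ≤ 2 * y := by linarith
  have mono := hα.2.1.monotoneOn
  rcases le_total x y with hxy | hxy
  · have h1 : α (x + y) ≤ α (2 * y) :=
      mono (Set.mem_Ici.2 (by linarith)) (Set.mem_Ici.2 h2y) (by linarith)
    have h2 : 0 ≤ α (2 * x) := kfun_nonneg hα h2x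
    linarith
  · have h1 : α (x + y) ≤ α (2 * x) :=
      mono (Set.mem_Ici.2 (by linarith)) (Set.mem_Ici.2 h2x) (by linarith)
    have h2 : 0 ≤ α (2 * y) := kfun_nonneg hα h2y
    linarith

lemma kfun_split3 {α : ℝ → ℝ} (hα : IsKFun α) {x y z : ℝ}
    (hx : 0 ≤ x) (hy : 0 ≤ y) (hz : 0 ≤ z) :
    α (x + y + z) ≤ α (3 * x) + α (3 * y) + α (3 * z) := by
  have mono := hα.2.1.monotoneOn
  set m := max x (max y z) with hm
  have hxm : x ≤ m := le_max_left _ _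
  have hym : y ≤ m := le_trans (le_max_left _ _) (le_max_right _ _)
  have hzm : z ≤ m := le_trans (le_max_right _ _) (le_max_right _ _)
  have hm0 : 0 ≤ m := le_trans hx hxm
  have h1 : α (x + y + z) ≤ α (3 * m) :=
    mono (Set.mem_Ici.2 (by linarith)) (Set.mem_Ici.2 (by linarith)) (by linarith)
  have hnx : 0 ≤ α (3 * x) := kfun_nonneg hα (by linarith)
  have hny : 0 ≤ α (3 * y) := kfun_nonneg hα (by linarith)
  have hnz : 0 ≤ α (3 * z) := kfun_nonneg hα (by linarith)
  have : m = x ∨ m = y ∨ m = z := by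
    rcases max_cases x (max y z) with ⟨h1', _⟩ | ⟨h1', _⟩
    · exact Or.inl h1'
    · rcases max_cases y z with ⟨h2', _⟩ | ⟨h2', _⟩
      · exact Or.inr (Or.inl (h1'.trans h2'))
      · exact Or.inr (Or.inr (h1'.trans h2'))
  rcases this with h | h | h <;> rw [h] at h1 <;> linarith

lemma rpow_add2_le {a x y : ℝ} (ha : 0 < a) (hx : 0 ≤ x) (hy : 0 ≤ y) :
    (x + y) ^ a ≤ 2 ^ a * x ^ a + 2 ^ a * y ^ a := by
  have hxn : (0:ℝ) ≤ x ^ a := Real.rpow_nonneg hx a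
  have hyn : (0:ℝ) ≤ y ^ a := Real.rpow_nonneg hy a
  rcases le_total x y with hxy | hxy
  · have h1 : (x + y) ^ a ≤ (2 * y) ^ a :=
      Real.rpow_le_rpow (by linarith) (by linarith) ha.le
    rw [Real.mul_rpow (by norm_num) hy] at h1
    nlinarith [Real.rpow_nonneg (show (0:ℝ) ≤ 2 by norm_num) a]
  · have h1 : (x + y) ^ a ≤ (2 * x) ^ a :=
      Real.rpow_le_rpow (by linarith) (by linarith) ha.le
    rw [Real.mul_rpow (by norm_num) hx] at h1
    nlinarith [Real.rpow_nonneg (show (0:ℝ) ≤ 2 by norm_num) a]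

lemma kinfty_inverse (γ : ℝ → ℝ) (hγ : IsKInftyFun γ) :
    ∃ ψ : ℝ → ℝ, Continuous ψ ∧ StrictMono ψ ∧ ψ 0 = 0 ∧
      ∀ x r, 0 ≤ x → γ x ≤ r → x ≤ ψ r := by
  obtain ⟨⟨hcont, hmono, h0⟩, htop⟩ := hγ
  set g : ℝ → ℝ := fun x => if x ≤ 0 then x else γ (max x 0) with hgdef
  have hgeq : ∀ x, 0 ≤ x → g x = γ x := by
    intro x hx
    by_cases hle : x ≤ 0
    · have hx0 : x = 0 := le_antisymm hle hx
      simp [hgdef, hx0, h0]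
    · simp [hgdef, hle, max_eq_left hx]
  have hgc : Continuous g := by
    refine Continuous.if_le continuous_id
      (hcont.comp_continuous (continuous_id.max continuous_const)
        (fun x => Set.mem_Ici.2 (le_max_right x 0)))
      continuous_id continuous_const ?_
    intro x hx
    replace hx : x = 0 := hx
    subst hx
    simp [h0]
  have hgm : StrictMono g := by
    intro x y hxy
    by_cases hx : x ≤ 0 <;> by_cases hy : y ≤ 0
    · simpa [hgdef, hx, hy] using hxy
    · push_neg at hy
      have hgy : 0 < γ y := by
        rw [← h0]
        exact hmono Set.self_mem_Ici (Set.mem_Ici.2 hy.le) hy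
      simp only [hgdef, if_pos hx, if_neg (not_le.2 hy), max_eq_left hy.le]
      linarith
    · exact absurd (hxy.le.trans hy) hx
    · push_neg at hx hy
      simp only [hgdef, if_neg (not_le.2 hx), if_neg (not_le.2 hy),
        max_eq_left hx.le, max_eq_left hy.le]
      exact hmono (Set.mem_Ici.2 hx.le) (Set.mem_Ici.2 hy.le) hxy
  have hmax : Tendsto (fun x : ℝ => max x 0) atTop atTop :=
    tendsto_atTop_mono (fun x => le_max_left x 0) tendsto_id
  have hst : Tendsto g atTop atTop := by
    refine Tendsto.congr' ?_ (htop.comp hmax)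
    filter_upwards [eventually_gt_atTop (0:ℝ)] with x hx
    simp [hgdef, Function.comp, not_le.2 hx]
  have hsb : Tendsto g atBot atBot := by
    refine Tendsto.congr' ?_ tendsto_id
    filter_upwards [eventually_le_atBot (0:ℝ)] with x hx
    simp [hgdef, hx]
  have hsurj : Function.Surjective g := hgc.surjective hst hsb
  set e := StrictMono.orderIsoOfSurjective g hgm hsurj with he
  refine ⟨fun r => e.symm r, e.symm.continuous, e.symm.strictMono, ?_, ?_⟩
  · have h00 : g 0 = 0 := by simp [hgdef]
    have := StrictMono.orderIsoOfSurjective_symm_apply_self g hgm hsurj 0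
    rw [h00] at this
    exact this
  · intro x r hx hle
    have hgx : g x ≤ r := by rw [hgeq x hx]; exact hle
    have hr : g (e.symm r) = r := StrictMono.orderIsoOfSurjective_self_symm_apply g hgm hsurj r
    have : g x ≤ g (e.symm r) := by rw [hr]; exact hgx
    exact (hgm.le_iff_le).1 this

lemma seqSup_nonneg {E : Type*} [SeminormedAddGroup E] (z : ℕ → E) (m : ℕ) :
    0 ≤ seqSup z m := NNReal.coe_nonneg _

lemma le_seqSup {E : Type*} [SeminormedAddGroup E] {z : ℕ → E} {m i : ℕ} (hi : i < m) :
    ‖z i‖ ≤ seqSup z m := by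
  rw [seqSup, ← coe_nnnorm, NNReal.coe_le_coe]
  exact Finset.le_sup (f := fun i => ‖z i‖₊) (Finset.mem_range.2 hi)

lemma seqSup_le {E : Type*} [SeminormedAddGroup E] {z : ℕ → E} {m : ℕ} {c : ℝ}
    (hc : 0 ≤ c) (hb : ∀ i, i < m → ‖z i‖ ≤ c) : seqSup z m ≤ c := by
  rw [seqSup, ← Real.coe_toNNReal c hc, NNReal.coe_le_coe]
  refine Finset.sup_le fun i hi => ?_
  rw [← NNReal.coe_le_coe, coe_nnnorm, Real.coe_toNNReal c hc]
  exact hb i (Finset.mem_range.1 hi)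

lemma seqSup_sub_le {E : Type*} [SeminormedAddGroup E] (z1 z2 : ℕ → E) (m : ℕ) :
    seqSup (fun i => z1 i - z2 i) m ≤ seqSup z1 m + seqSup z2 m := by
  refine seqSup_le (add_nonneg (seqSup_nonneg _ _) (seqSup_nonneg _ _)) fun i hi => ?_
  calc ‖z1 i - z2 i‖ ≤ ‖z1 i‖ + ‖z2 i‖ := norm_sub_le _ _
    _ ≤ seqSup z1 m + seqSup z2 m := add_le_add (le_seqSup hi) (le_seqSup hi)


open Real in
/-- (Corollary 2.)  The FIE with polynomially discounted initial-state cost is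
RGAS when the system is i-IOSS with polynomial KL bound and `a₂/b₂ ≥ a₁/b₁`. -/
theorem fie_rgas_polynomial
    (n g p : ℕ)
    (f : EuclideanSpace ℝ (Fin n) → EuclideanSpace ℝ (Fin g) → EuclideanSpace ℝ (Fin n))
    (h : EuclideanSpace ℝ (Fin n) → EuclideanSpace ℝ (Fin p))
    (hf : Continuous fun q : EuclideanSpace ℝ (Fin n) × EuclideanSpace ℝ (Fin g) => f q.1 q.2)
    (hh : Continuous h)
    -- (a) i-IOSS with KL bound β(s,t) = c₁·s^{a₁}·(t+1)^{-b₁}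
    (c₁ a₁ b₁ : ℝ) (hc₁ : 0 < c₁) (ha₁ : 0 < a₁) (hb₁ : 0 < b₁)
    (α₁ α₂ : ℝ → ℝ) (hα₁ : IsKFun α₁) (hα₂ : IsKFun α₂)
    (hIOSS : ∀ (x01 x02 : EuclideanSpace ℝ (Fin n)) (w1 w2 : ℕ → EuclideanSpace ℝ (Fin g))
      (t : ℕ),
      ‖traj f x01 w1 t - traj f x02 w2 t‖ ≤
        c₁ * ‖x01 - x02‖ ^ a₁ * ((t : ℝ) + 1) ^ (-b₁)
          + α₁ (seqSup (fun i => w1 i - w2 i) t)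
          + α₂ (seqSup (fun i => h (traj f x01 w1 i) - h (traj f x02 w2 i)) (t + 1)))
    -- (b) the structure and bounds of the cost function
    (c₂ a₂ b₂ : ℝ) (hc₂ : 0 < c₂) (ha₂ : 0 < a₂) (hb₂ : 0 < b₂)
    (lx : EuclideanSpace ℝ (Fin n) → ℝ)
    (lwv : (ℕ → EuclideanSpace ℝ (Fin g)) → (ℕ → EuclideanSpace ℝ (Fin p)) → ℕ → ℝ)
    (hlx_cont : Continuous lx)
    (hlwv_cont : ∀ t : ℕ, Continuous fun q :
      (ℕ → EuclideanSpace ℝ (Fin g)) × (ℕ → EuclideanSpace ℝ (Fin p)) => lwv q.1 q.2 t)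
    (γ'x : ℝ → ℝ) (hγ'x : IsKInftyFun γ'x)
    (hlx : ∀ x : EuclideanSpace ℝ (Fin n), c₂ * ‖x‖ ^ a₂ ≤ lx x ∧ lx x ≤ γ'x ‖x‖)
    (γₗw γₗv γᵤw γᵤv : ℝ → ℝ)
    (hγₗw : IsKInftyFun γₗw) (hγₗv : IsKInftyFun γₗv)
    (hγᵤw : IsKInftyFun γᵤw) (hγᵤv : IsKInftyFun γᵤv)
    (hlwv : ∀ (ω : ℕ → EuclideanSpace ℝ (Fin g)) (ν : ℕ → EuclideanSpace ℝ (Fin p)) (t : ℕ),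
      γₗw (seqSup ω t) + γₗv (seqSup ν (t + 1)) ≤ lwv ω ν t ∧
      lwv ω ν t ≤ γᵤw (seqSup ω t) + γᵤv (seqSup ν (t + 1)))
    -- (c) the exponent condition
    (hab : a₂ / b₂ ≥ a₁ / b₁) :
    -- RGAS of the FIE with cost V_t(χ(0)-x̄₀, ω) = l_x(χ(0)-x̄₀)·(t+1)^{-b₂} + l_{wv}(ω,ν,t)
    ∃ βx : ℝ → ℝ → ℝ, ∃ αw αv : ℝ → ℝ, IsKLFun βx ∧ IsKFun αw ∧ IsKFun αv ∧
      ∀ (x0 xbar0 : EuclideanSpace ℝ (Fin n)) (w : ℕ → EuclideanSpace ℝ (Fin g))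
        (v : ℕ → EuclideanSpace ℝ (Fin p)),
        (∃ Mw : ℝ, ∀ i, ‖w i‖ ≤ Mw) → (∃ Mv : ℝ, ∀ i, ‖v i‖ ≤ Mv) →
        ∀ (xhat0 : ℕ → EuclideanSpace ℝ (Fin n)) (what : ℕ → ℕ → EuclideanSpace ℝ (Fin g)),
          -- (b) the infimum is attainable at (xhat0 t, what t); in particular the cost
          -- there is no larger than at the true (x0, w), with fitted noises
          -- ν(i) = h(x(i; x0, w)) + v(i) - h(x(i; χ0, ω))
          (∀ t : ℕ,
            lx (xhat0 t - xbar0) * ((t : ℝ) + 1) ^ (-b₂)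
              + lwv (what t)
                  (fun i => (h (traj f x0 w i) + v i) - h (traj f (xhat0 t) (what t) i)) t
            ≤ lx (x0 - xbar0) * ((t : ℝ) + 1) ^ (-b₂) + lwv w v t) →
          ∀ t : ℕ,
            ‖traj f x0 w t - traj f (xhat0 t) (what t) t‖ ≤
              βx ‖x0 - xbar0‖ t + αw (seqSup w t) + αv (seqSup v (t + 1)) := by
  obtain ⟨ψw, hψwc, hψwm, hψw0, hψwkey⟩ := kinfty_inverse γₗw hγₗw
  obtain ⟨ψv, hψvc, hψvm, hψv0, hψvkey⟩ := kinfty_inverse γₗv hγₗv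
  have hψwK : IsKFun ψw := ⟨hψwc.continuousOn, hψwm.strictMonoOn _, hψw0⟩
  have hψvK : IsKFun ψv := ⟨hψvc.continuousOn, hψvm.strictMonoOn _, hψv0⟩
  set q : ℝ := a₁ / a₂ with hqdef
  have hq0 : 0 < q := div_pos ha₁ ha₂
  set K : ℝ := c₁ * 2 ^ a₁ / c₂ ^ q with hKdef
  have hK0 : 0 < K :=
    div_pos (mul_pos hc₁ (Real.rpow_pos_of_pos two_pos a₁)) (Real.rpow_pos_of_pos hc₂ q)
  obtain ⟨Θ, hΘdef⟩ : ∃ Θ : ℝ → ℝ,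
      Θ = fun r => K * r ^ q + α₁ (2 * ψw r) + α₂ (2 * ψv r) := ⟨_, rfl⟩
  have h2pos : (0:ℝ) < 2 := two_pos
  have h3pos : (0:ℝ) < 3 := by norm_num
  have hΘ : IsKFun Θ := by
    rw [hΘdef]
    exact ((isKFun_rpow_mul hK0 hq0).add
      (hα₁.compK ((isKFun_linear h2pos).compK hψwK))).add
      (hα₂.compK ((isKFun_linear h2pos).compK hψvK))
  have haq : a₂ * q = a₁ := by rw [hqdef]; field_simp
  have hbq : b₂ * q ≤ b₁ := by
    have h1 := (div_le_div_iff₀ hb₁ hb₂).1 hab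
    rw [hqdef, mul_div_assoc']
    rw [div_le_iff₀ ha₂]
    nlinarith
  refine ⟨fun s t => c₁ * 2 ^ a₁ * s ^ a₁ * (t + 1) ^ (-b₁)
        + Θ (3 * (γ'x s * (t + 1) ^ (-b₂))),
      fun r => Θ (3 * γᵤw r) + α₁ (2 * r),
      fun r => Θ (3 * γᵤv r) + α₂ (2 * r), ?_, ?_, ?_, ?_⟩
  · constructor
    · intro t ht
      have ht1 : (0:ℝ) < t + 1 := by linarith
      have hd1 : (0:ℝ) < (t + 1) ^ (-b₁) := Real.rpow_pos_of_pos ht1 _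
      have hd2 : (0:ℝ) < (t + 1) ^ (-b₂) := Real.rpow_pos_of_pos ht1 _
      have heq : (fun s => c₁ * 2 ^ a₁ * s ^ a₁ * (t + 1) ^ (-b₁)
            + Θ (3 * (γ'x s * (t + 1) ^ (-b₂))))
          = fun s => (c₁ * 2 ^ a₁ * (t + 1) ^ (-b₁)) * s ^ a₁
            + Θ ((3 * (t + 1) ^ (-b₂)) * γ'x s) := by
        funext s
        congr 1
        · ring
        · congr 1
          ring
      rw [heq]
      exact (isKFun_rpow_mul (by positivity) ha₁).add
        (hΘ.compK ((isKFun_linear (by positivity)).compK hγ'x.1))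
    · intro s hs
      have hE : 0 ≤ γ'x s := kfun_nonneg hγ'x.1 hs
      have hC : 0 ≤ c₁ * 2 ^ a₁ * s ^ a₁ :=
        mul_nonneg (mul_nonneg hc₁.le (Real.rpow_nonneg (by norm_num) _))
          (Real.rpow_nonneg hs _)
      refine ⟨?_, ?_, ?_⟩
      · have h1 : ContinuousOn (fun t : ℝ => (t + 1) ^ (-b₁)) (Set.Ici 0) :=
          (continuousOn_id.add continuousOn_const).rpow_const
            (fun x hx => Or.inl (by intro hc; replace hc : x + 1 = 0 := hc; simp at hx; linarith))
        have h2 : ContinuousOn (fun t : ℝ => (t + 1) ^ (-b₂)) (Set.Ici 0) :=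
          (continuousOn_id.add continuousOn_const).rpow_const
            (fun x hx => Or.inl (by intro hc; replace hc : x + 1 = 0 := hc; simp at hx; linarith))
        refine (continuousOn_const.mul h1).add (hΘ.1.comp
          (continuousOn_const.mul (continuousOn_const.mul h2)) ?_)
        intro x hx
        simp only [Set.mem_Ici] at hx ⊢
        have : (0:ℝ) ≤ (x + 1) ^ (-b₂) := Real.rpow_nonneg (by linarith) _
        positivity
      · intro x hx y hy hxy
        simp only [Set.mem_Ici] at hx hy
        have key : ∀ b : ℝ, 0 < b → (y + 1) ^ (-b) ≤ (x + 1) ^ (-b) := fun b hb =>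
          Real.rpow_le_rpow_of_nonpos (by linarith) (by linarith) (by linarith)
        refine add_le_add (mul_le_mul_of_nonneg_left (key b₁ hb₁) hC)
          (hΘ.2.1.monotoneOn ?_ ?_ ?_)
        · exact Set.mem_Ici.2 (mul_nonneg (by norm_num)
            (mul_nonneg hE (Real.rpow_nonneg (by linarith) _)))
        · exact Set.mem_Ici.2 (mul_nonneg (by norm_num)
            (mul_nonneg hE (Real.rpow_nonneg (by linarith) _)))
        · have := key b₂ hb₂
          nlinarith
      · have hbtend : ∀ b : ℝ, 0 < b →
            Tendsto (fun t : ℝ => (t + 1) ^ (-b)) atTop (𝓝 0) := by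
          intro b hb
          exact (tendsto_rpow_neg_atTop hb).comp
            (tendsto_atTop_add_const_right atTop 1 tendsto_id)
        have hterm1 : Tendsto (fun t : ℝ => c₁ * 2 ^ a₁ * s ^ a₁ * (t + 1) ^ (-b₁))
            atTop (𝓝 0) := by
          have := (hbtend b₁ hb₁).const_mul (c₁ * 2 ^ a₁ * s ^ a₁)
          simpa using this
        have hinner : Tendsto (fun t : ℝ => 3 * (γ'x s * (t + 1) ^ (-b₂)))
            atTop (𝓝 0) := by
          have := ((hbtend b₂ hb₂).const_mul (γ'x s)).const_mul (3:ℝ)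
          simpa using this
        have hΘ0 : ContinuousWithinAt Θ (Set.Ici 0) 0 := hΘ.1 0 Set.self_mem_Ici
        have hinner' : Tendsto (fun t : ℝ => 3 * (γ'x s * (t + 1) ^ (-b₂)))
            atTop (𝓝[Set.Ici 0] 0) := by
          rw [tendsto_nhdsWithin_iff]
          refine ⟨hinner, ?_⟩
          filter_upwards [eventually_ge_atTop (0:ℝ)] with x hx
          exact Set.mem_Ici.2 (mul_nonneg (by norm_num)
            (mul_nonneg hE (Real.rpow_nonneg (by linarith) _)))
        have hterm2 : Tendsto (fun t : ℝ => Θ (3 * (γ'x s * (t + 1) ^ (-b₂))))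
            atTop (𝓝 0) := by
          have := hΘ0.tendsto.comp hinner'
          rwa [hΘ.2.2] at this
        simpa using hterm1.add hterm2
  · exact (hΘ.compK ((isKFun_linear h3pos).compK hγᵤw.1)).add
      (hα₁.compK (isKFun_linear h2pos))
  · exact (hΘ.compK ((isKFun_linear h3pos).compK hγᵤv.1)).add
      (hα₂.compK (isKFun_linear h2pos))
  · intro x0 xbar0 w v _ _ xhat0 what hopt t
    have ht1 : (0:ℝ) < (t:ℝ) + 1 := by positivity
    have hone1 : (1:ℝ) ≤ (t:ℝ) + 1 := by
      have : (0:ℝ) ≤ (t:ℝ) := Nat.cast_nonneg t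
      linarith
    set s : ℝ := ‖x0 - xbar0‖ with hsdef
    set W : ℝ := seqSup w t with hWdef
    set V : ℝ := seqSup v (t + 1) with hVdef
    set D : ℝ := ‖xhat0 t - xbar0‖ with hDdef
    set νhat : ℕ → EuclideanSpace ℝ (Fin p) :=
      fun i => (h (traj f x0 w i) + v i) - h (traj f (xhat0 t) (what t) i) with hνdef
    set Nu : ℝ := seqSup νhat (t + 1) with hNudef
    set Wh : ℝ := seqSup (what t) t with hWhdef
    set d2 : ℝ := ((t:ℝ) + 1) ^ (-b₂) with hd2def
    have hd2pos : 0 < d2 := Real.rpow_pos_of_pos ht1 _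
    set d1 : ℝ := ((t:ℝ) + 1) ^ (-b₁) with hd1def
    have hd1pos : 0 < d1 := Real.rpow_pos_of_pos ht1 _
    have hs0 : 0 ≤ s := norm_nonneg _
    have hW0 : 0 ≤ W := seqSup_nonneg _ _
    have hV0 : 0 ≤ V := seqSup_nonneg _ _
    have hD0 : 0 ≤ D := norm_nonneg _
    have hNu0 : 0 ≤ Nu := seqSup_nonneg _ _
    have hWh0 : 0 ≤ Wh := seqSup_nonneg _ _
    set ρ : ℝ := γ'x s * d2 + γᵤw W + γᵤv V with hρdef
    have hγ's0 : 0 ≤ γ'x s := kfun_nonneg hγ'x.1 hs0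
    have hγW0 : 0 ≤ γᵤw W := kfun_nonneg hγᵤw.1 hW0
    have hγV0 : 0 ≤ γᵤv V := kfun_nonneg hγᵤv.1 hV0
    have hρ0 : 0 ≤ ρ := by
      have : 0 ≤ γ'x s * d2 := mul_nonneg hγ's0 hd2pos.le
      rw [hρdef]; linarith
    -- main cost inequality
    have h1 : c₂ * D ^ a₂ * d2 + (γₗw Wh + γₗv Nu) ≤ ρ := by
      have hopt' := hopt t
      have l1 : c₂ * D ^ a₂ ≤ lx (xhat0 t - xbar0) := (hlx _).1
      have l2 : γₗw Wh + γₗv Nu ≤ lwv (what t) νhat t := (hlwv _ _ t).1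
      have r1 : lx (x0 - xbar0) ≤ γ'x s := (hlx _).2
      have r2 : lwv w v t ≤ γᵤw W + γᵤv V := (hlwv _ _ t).2
      have m1 : c₂ * D ^ a₂ * d2 ≤ lx (xhat0 t - xbar0) * d2 :=
        mul_le_mul_of_nonneg_right l1 hd2pos.le
      have m2 : lx (x0 - xbar0) * d2 ≤ γ'x s * d2 :=
        mul_le_mul_of_nonneg_right r1 hd2pos.le
      rw [hρdef]
      linarith
    have hDa2d : c₂ * D ^ a₂ * d2 ≤ ρ := by
      have h2 : 0 ≤ γₗw Wh := kfun_nonneg hγₗw.1 hWh0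
      have h3 : 0 ≤ γₗv Nu := kfun_nonneg hγₗv.1 hNu0
      linarith
    have hDnn : 0 ≤ c₂ * D ^ a₂ * d2 :=
      mul_nonneg (mul_nonneg hc₂.le (Real.rpow_nonneg hD0 _)) hd2pos.le
    have hWhle : Wh ≤ ψw ρ := by
      refine hψwkey Wh ρ hWh0 ?_
      have h3 : 0 ≤ γₗv Nu := kfun_nonneg hγₗv.1 hNu0
      linarith
    have hNule : Nu ≤ ψv ρ := by
      refine hψvkey Nu ρ hNu0 ?_
      have h2 : 0 ≤ γₗw Wh := kfun_nonneg hγₗw.1 hWh0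
      linarith
    -- bound on D^a₁
    have hone : d2 * (((t:ℝ) + 1) ^ b₂) = 1 := by
      rw [hd2def, ← Real.rpow_add ht1]
      simp
    have hDa : c₂ * D ^ a₂ ≤ ρ * ((t:ℝ) + 1) ^ b₂ := by
      have := mul_le_mul_of_nonneg_right hDa2d (Real.rpow_nonneg ht1.le b₂)
      calc c₂ * D ^ a₂ = c₂ * D ^ a₂ * (d2 * ((t:ℝ) + 1) ^ b₂) := by rw [hone, mul_one]
        _ = c₂ * D ^ a₂ * d2 * ((t:ℝ) + 1) ^ b₂ := by ring
        _ ≤ ρ * ((t:ℝ) + 1) ^ b₂ := this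
    have hDq : D ^ a₁ ≤ ρ ^ q * ((t:ℝ) + 1) ^ (b₂ * q) / c₂ ^ q := by
      have hDa2 : D ^ a₂ ≤ ρ * ((t:ℝ) + 1) ^ b₂ / c₂ := by
        rw [le_div_iff₀ hc₂]
        linarith [hDa]
      have h' : (D ^ a₂) ^ q ≤ (ρ * ((t:ℝ) + 1) ^ b₂ / c₂) ^ q :=
        Real.rpow_le_rpow (Real.rpow_nonneg hD0 _) hDa2 hq0.le
      rw [← Real.rpow_mul hD0, haq] at h'
      rwa [Real.div_rpow (mul_nonneg hρ0 (Real.rpow_nonneg ht1.le _)) hc₂.le,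
        Real.mul_rpow hρ0 (Real.rpow_nonneg ht1.le _), ← Real.rpow_mul ht1.le] at h'
    have hexp : ((t:ℝ) + 1) ^ (b₂ * q) * d1 ≤ 1 := by
      rw [hd1def, ← Real.rpow_add ht1]
      exact Real.rpow_le_one_of_one_le_of_nonpos hone1 (by linarith)
    -- i-IOSS terms
    have hT1 : c₁ * ‖x0 - xhat0 t‖ ^ a₁ * d1 ≤ c₁ * 2 ^ a₁ * s ^ a₁ * d1 + K * ρ ^ q := by
      have htri : ‖x0 - xhat0 t‖ ≤ s + D := by
        have heq : x0 - xhat0 t = (x0 - xbar0) - (xhat0 t - xbar0) := by abel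
        rw [heq, hsdef, hDdef]
        exact norm_sub_le _ _
      have h1' : ‖x0 - xhat0 t‖ ^ a₁ ≤ (s + D) ^ a₁ :=
        Real.rpow_le_rpow (norm_nonneg _) htri ha₁.le
      have h2' : (s + D) ^ a₁ ≤ 2 ^ a₁ * s ^ a₁ + 2 ^ a₁ * D ^ a₁ :=
        rpow_add2_le ha₁ hs0 hD0
      have h2n : (0:ℝ) ≤ 2 ^ a₁ := Real.rpow_nonneg (by norm_num) _
      have hρq0 : 0 ≤ ρ ^ q := Real.rpow_nonneg hρ0 _
      have hDterm : c₁ * (2 ^ a₁ * D ^ a₁) * d1 ≤ K * ρ ^ q := by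
        calc c₁ * (2 ^ a₁ * D ^ a₁) * d1
            ≤ c₁ * (2 ^ a₁ * (ρ ^ q * ((t:ℝ) + 1) ^ (b₂ * q) / c₂ ^ q)) * d1 := by
              refine mul_le_mul_of_nonneg_right
                (mul_le_mul_of_nonneg_left ?_ hc₁.le) hd1pos.le
              exact mul_le_mul_of_nonneg_left hDq h2n
          _ = (K * ρ ^ q) * (((t:ℝ) + 1) ^ (b₂ * q) * d1) := by
              rw [hKdef]; ring
          _ ≤ (K * ρ ^ q) * 1 :=
              mul_le_mul_of_nonneg_left hexp (mul_nonneg hK0.le hρq0)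
          _ = K * ρ ^ q := mul_one _
      calc c₁ * ‖x0 - xhat0 t‖ ^ a₁ * d1
          ≤ c₁ * (2 ^ a₁ * s ^ a₁ + 2 ^ a₁ * D ^ a₁) * d1 :=
            mul_le_mul_of_nonneg_right
              (mul_le_mul_of_nonneg_left (h1'.trans h2') hc₁.le) hd1pos.le
        _ = c₁ * (2 ^ a₁ * s ^ a₁) * d1 + c₁ * (2 ^ a₁ * D ^ a₁) * d1 := by ring
        _ ≤ c₁ * 2 ^ a₁ * s ^ a₁ * d1 + K * ρ ^ q := by
            refine add_le_add (le_of_eq (by ring)) hDterm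
    have hψwρ0 : 0 ≤ ψw ρ := by
      have := hψwm.monotone hρ0
      rwa [hψw0] at this
    have hψvρ0 : 0 ≤ ψv ρ := by
      have := hψvm.monotone hρ0
      rwa [hψv0] at this
    have hT2 : α₁ (seqSup (fun i => w i - what t i) t) ≤ α₁ (2 * W) + α₁ (2 * ψw ρ) := by
      have hb : seqSup (fun i => w i - what t i) t ≤ W + ψw ρ := by
        have := seqSup_sub_le w (what t) t
        rw [← hWdef, ← hWhdef] at this
        linarith
      have hmono := hα₁.2.1.monotoneOn
      calc α₁ (seqSup (fun i => w i - what t i) t) ≤ α₁ (W + ψw ρ) :=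
            hmono (Set.mem_Ici.2 (seqSup_nonneg _ _))
              (Set.mem_Ici.2 (add_nonneg hW0 hψwρ0)) hb
        _ ≤ α₁ (2 * W) + α₁ (2 * ψw ρ) := kfun_split2 hα₁ hW0 hψwρ0
    have hT3 : α₂ (seqSup (fun i => h (traj f x0 w i) - h (traj f (xhat0 t) (what t) i))
          (t + 1)) ≤ α₂ (2 * ψv ρ) + α₂ (2 * V) := by
      have hb : seqSup (fun i => h (traj f x0 w i) - h (traj f (xhat0 t) (what t) i))
          (t + 1) ≤ Nu + V := by
        refine seqSup_le (add_nonneg hNu0 hV0) fun i hi => ?_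
        have heq : h (traj f x0 w i) - h (traj f (xhat0 t) (what t) i) = νhat i - v i := by
          rw [hνdef]; show _ = (h (traj f x0 w i) + v i - h (traj f (xhat0 t) (what t) i)) - v i; rw [add_sub_right_comm, add_sub_cancel_right]
        rw [heq]
        calc ‖νhat i - v i‖ ≤ ‖νhat i‖ + ‖v i‖ := norm_sub_le _ _
          _ ≤ Nu + V := add_le_add (le_seqSup hi) (le_seqSup hi)
      have hmono := hα₂.2.1.monotoneOn
      have step1 : α₂ (seqSup (fun i => h (traj f x0 w i) - h (traj f (xhat0 t) (what t) i))
          (t + 1)) ≤ α₂ (Nu + V) :=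
        hmono (Set.mem_Ici.2 (seqSup_nonneg _ _))
          (Set.mem_Ici.2 (add_nonneg hNu0 hV0)) hb
      have step2 : α₂ (Nu + V) ≤ α₂ (2 * Nu) + α₂ (2 * V) := kfun_split2 hα₂ hNu0 hV0
      have step3 : α₂ (2 * Nu) ≤ α₂ (2 * ψv ρ) :=
        hmono (Set.mem_Ici.2 (by linarith)) (Set.mem_Ici.2 (by linarith)) (by linarith)
      linarith
    have hΘρval : Θ ρ = K * ρ ^ q + α₁ (2 * ψw ρ) + α₂ (2 * ψv ρ) := by rw [hΘdef]
    have hΘsplit : Θ ρ ≤ Θ (3 * (γ'x s * d2)) + Θ (3 * γᵤw W) + Θ (3 * γᵤv V) := by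
      have := kfun_split3 hΘ (mul_nonneg hγ's0 hd2pos.le) hγW0 hγV0
      rw [hρdef]
      exact this
    have h0 := hIOSS x0 (xhat0 t) w (what t) t
    rw [← hd1def] at h0
    show ‖traj f x0 w t - traj f (xhat0 t) (what t) t‖ ≤
        (c₁ * 2 ^ a₁ * s ^ a₁ * d1 + Θ (3 * (γ'x s * d2)))
        + (Θ (3 * γᵤw W) + α₁ (2 * W)) + (Θ (3 * γᵤv V) + α₂ (2 * V))
    linarith [h0, hT1, hT2, hT3, hΘρval, hΘsplit]
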